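/- Let g ∈ A^0_{2n} and let i ∈ {0,…,2n−1} satisfy g(i) < g(i+1) (equivalently ℓ(g·s_i) = ℓ(g)+1). Then the pair (i, i+1) belongs to L(g·s_i) but not to L(g); the map ι_i, which sends (x,y) ∈ L(g) to the unique pair (x',y') with x' ∈ {0,…,2n−1}, x' ≡ s_i(x) (mod 2n), and y' = s_i(y) + (x' − s_i(x)), is a well-defined injection from L(g) into L(g·s_i); and the square commutes: Φ(ι_i(x,y)) = ι_j(Φ(x,y)) for all (x,y) ∈ L(g), where j is the element of {0,…,2n−1} with j ≡ −i−2 (mod 2n), Φ on the left being the map L(g·s_i) → L(R^0(g)·s_j) and Φ on the right the map L(g) → L(R^0(g)). -/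

import Mathlib

/-- The underlying function of the affine simple reflection `s_i`, exchanging
`i + 2nt` and `i + 1 + 2nt` for all `t ∈ ℤ` and fixing all other integers. -/
def sFun (n : ℕ) (i : ℤ) : ℤ → ℤ := fun x =>
  if (2*(n:ℤ)) ∣ (x - i) then x + 1 else if (2*(n:ℤ)) ∣ (x - i - 1) then x - 1 else x

theorem two_n_not_dvd_one (n : ℕ) : ¬ ((2*(n:ℤ)) ∣ 1) := by
  intro h
  have h' := Int.isUnit_iff.mp (isUnit_of_dvd_one h)
  omega

theorem sFun_invol (n : ℕ) (i : ℤ) (x : ℤ) : sFun n i (sFun n i x) = x := by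
  unfold sFun
  by_cases h1 : (2*(n:ℤ)) ∣ (x - i)
  · have h2 : ¬ (2*(n:ℤ)) ∣ (x + 1 - i) := by
      intro hc
      apply two_n_not_dvd_one n
      have hd := dvd_sub hc h1
      have he : (x + 1 - i) - (x - i) = 1 := by ring
      rwa [he] at hd
    have h3 : (2*(n:ℤ)) ∣ (x + 1 - i - 1) := by
      have he : x + 1 - i - 1 = x - i := by ring
      rwa [he]
    simp [h1, h2, h3]
  · by_cases h2 : (2*(n:ℤ)) ∣ (x - i - 1)
    · have h3 : (2*(n:ℤ)) ∣ (x - 1 - i) := by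
        have he : x - 1 - i = x - i - 1 := by ring
        rwa [he]
      simp [h1, h2, h3]
    · simp [h1, h2]

/-- The affine simple reflection `s_i ∈ A⁰_(2n)`. -/
def sPerm (n : ℕ) (i : ℤ) : Equiv.Perm ℤ :=
  ⟨sFun n i, sFun n i, sFun_invol n i, sFun_invol n i⟩

/-- Membership in `A⁰_(2n)`: a bijection of `ℤ` with `g(i+2n) = g(i)+2n` and
`∑_{i=1}^{2n} (g(i)-i) = 0`. -/
def IsA0 (n : ℕ) (g : Equiv.Perm ℤ) : Prop :=
  (∀ i : ℤ, g (i + 2*n) = g i + 2*n) ∧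
    (∑ i ∈ Finset.Icc (1 : ℤ) (2*(n:ℤ)), (g i - i)) = 0

/-- The automorphism `R⁰`, `(R⁰g)(a) = -g(-a-1) - 1`. -/
def R0 (g : Equiv.Perm ℤ) : Equiv.Perm ℤ where
  toFun a := -(g (-a - 1)) - 1
  invFun a := -(g.symm (-a - 1)) - 1
  left_inv := by
    intro a
    show -(g.symm (-(-(g (-a - 1)) - 1) - 1)) - 1 = a
    have h : -(-(g (-a - 1)) - 1) - 1 = g (-a - 1) := by ring
    rw [h, Equiv.symm_apply_apply]
    ring
  right_inv := by
    intro a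
    show -(g (-(-(g.symm (-a - 1)) - 1) - 1)) - 1 = a
    have h : -(-(g.symm (-a - 1)) - 1) - 1 = g.symm (-a - 1) := by ring
    rw [h, Equiv.apply_symm_apply]
    ring

/-- The inversion set `L(f) = {(x,y) ∈ {0,…,2n-1} × ℤ : x < y ∧ f(x) > f(y)}`. -/
def Lset (n : ℕ) (f : ℤ → ℤ) : Set (ℤ × ℤ) :=
  {p | 0 ≤ p.1 ∧ p.1 ≤ 2*n - 1 ∧ p.1 < p.2 ∧ f p.2 < f p.1}

/-- The map `Φ`, sending `(x,y)` (with `0 ≤ x ≤ 2n-1`, `x < y`) to the unique pair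
`(x', y') = (2n-y-1+2nm, 2n-x-1+2nm)` with `m ∈ ℤ` and `x' ∈ {0,…,2n-1}`. -/
def PhiMap (n : ℕ) (p : ℤ × ℤ) : ℤ × ℤ :=
  ((2*n - p.2 - 1) % (2*n),
    2*n - p.1 - 1 + ((2*n - p.2 - 1) % (2*n) - (2*n - p.2 - 1)))

/-- The map `ι_i`, sending `(x,y)` to the unique pair `(x',y')` with `x' ∈ {0,…,2n-1}`,
`x' ≡ s_i(x) (mod 2n)` and `y' = s_i(y) + (x' - s_i(x))`. -/
def iotaMap (n : ℕ) (i : ℤ) (p : ℤ × ℤ) : ℤ × ℤ :=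
  (sFun n i p.1 % (2*n), sFun n i p.2 + (sFun n i p.1 % (2*n) - sFun n i p.1))

theorem dvd_shift (N a k : ℤ) : N ∣ (a + N*k) ↔ N ∣ a := by
  constructor <;> intro h
  · have h2 := dvd_sub h (dvd_mul_right N k)
    simpa using h2
  · exact dvd_add h (dvd_mul_right N k)

theorem sFun_add (n : ℕ) (i x k : ℤ) :
    sFun n i (x + 2*(n:ℤ)*k) = sFun n i x + 2*(n:ℤ)*k := by
  unfold sFun
  have e1 : x + 2*(n:ℤ)*k - i = (x - i) + 2*(n:ℤ)*k := by ring
  have e2 : x + 2*(n:ℤ)*k - i - 1 = (x - i - 1) + 2*(n:ℤ)*k := by ring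
  by_cases h1 : (2*(n:ℤ)) ∣ (x - i)
  · have h1' : (2*(n:ℤ)) ∣ (x + 2*(n:ℤ)*k - i) := by
      rw [e1, dvd_shift]; exact h1
    rw [if_pos h1', if_pos h1]; ring
  · have h1' : ¬ (2*(n:ℤ)) ∣ (x + 2*(n:ℤ)*k - i) := by
      rw [e1, dvd_shift]; exact h1
    by_cases h2 : (2*(n:ℤ)) ∣ (x - i - 1)
    · have h2' : (2*(n:ℤ)) ∣ (x + 2*(n:ℤ)*k - i - 1) := by
        rw [e2, dvd_shift]; exact h2
      rw [if_neg h1', if_pos h2', if_neg h1, if_pos h2]; ring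
    · have h2' : ¬ (2*(n:ℤ)) ∣ (x + 2*(n:ℤ)*k - i - 1) := by
        rw [e2, dvd_shift]; exact h2
      rw [if_neg h1', if_neg h2', if_neg h1, if_neg h2]

theorem gadd (n : ℕ) (g : Equiv.Perm ℤ)
    (hg : ∀ i : ℤ, g (i + 2*(n:ℤ)) = g i + 2*(n:ℤ)) (x k : ℤ) :
    g (x + 2*(n:ℤ)*k) = g x + 2*(n:ℤ)*k := by
  induction k using Int.induction_on with
  | zero => simp
  | succ m ih =>
    have h := hg (x + 2*(n:ℤ)*(m:ℤ))
    rw [ih] at h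
    rw [show x + 2*(n:ℤ)*((m:ℤ)+1) = (x + 2*(n:ℤ)*(m:ℤ)) + 2*(n:ℤ) from by ring, h]
    ring
  | pred m ih =>
    have h := hg (x + 2*(n:ℤ)*(-(m:ℤ)-1))
    rw [show x + 2*(n:ℤ)*(-(m:ℤ)-1) + 2*(n:ℤ) = x + 2*(n:ℤ)*(-(m:ℤ)) from by ring, ih] at h
    have : g (x + 2*(n:ℤ)*(-(m:ℤ)-1)) = g x + 2*(n:ℤ)*(-(m:ℤ)) - 2*(n:ℤ) := by linarith
    rw [this]; ring

theorem sFun_reflect (n : ℕ) (i j z : ℤ) (hij : (2*(n:ℤ)) ∣ (j + i + 2)) :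
    sFun n j (-z - 1) = -(sFun n i z) - 1 := by
  unfold sFun
  by_cases hA : (2*(n:ℤ)) ∣ (z - i)
  · have hB : ¬ (2*(n:ℤ)) ∣ (-z-1-j) := by
      intro h
      apply two_n_not_dvd_one n
      have h2 := dvd_add (dvd_add h hA) hij
      rwa [show -z-1-j + (z-i) + (j+i+2) = 1 from by ring] at h2
    have hC : (2*(n:ℤ)) ∣ (-z-1-j-1) := by
      have h2 := (dvd_neg).mpr (dvd_add hA hij)
      rwa [show -((z-i)+(j+i+2)) = -z-1-j-1 from by ring] at h2
    rw [if_pos hA, if_neg hB, if_pos hC]; ring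
  · by_cases hD : (2*(n:ℤ)) ∣ (z - i - 1)
    · have hB : (2*(n:ℤ)) ∣ (-z-1-j) := by
        have h2 := (dvd_neg).mpr (dvd_add hD hij)
        rwa [show -((z-i-1)+(j+i+2)) = -z-1-j from by ring] at h2
      rw [if_neg hA, if_pos hD, if_pos hB]; ring
    · have hB : ¬ (2*(n:ℤ)) ∣ (-z-1-j) := by
        intro h
        apply hD
        have h2 := (dvd_neg).mpr (dvd_add h hij)
        rwa [show -((-z-1-j)+(j+i+2)) = z - i - 1 from by ring] at h2
      have hC : ¬ (2*(n:ℤ)) ∣ (-z-1-j-1) := by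
        intro h
        apply hA
        have h2 := (dvd_neg).mpr (dvd_add h hij)
        rwa [show -((-z-1-j-1)+(j+i+2)) = z - i from by ring] at h2
      rw [if_neg hA, if_neg hD, if_neg hB, if_neg hC]

theorem sFun_strict (n : ℕ) (hn : 0 < n) (i x y : ℤ) (hxy : x < y)
    (hne : ¬ ((2*(n:ℤ)) ∣ (x - i) ∧ y = x + 1)) :
    sFun n i x < sFun n i y := by
  have hN : (2:ℤ) ≤ 2*(n:ℤ) := by omega
  unfold sFun
  by_cases h1 : (2*(n:ℤ)) ∣ (x - i)
  · have hy1 : y ≠ x + 1 := fun h => hne ⟨h1, h⟩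
    by_cases h3 : (2*(n:ℤ)) ∣ (y - i)
    · rw [if_pos h1, if_pos h3]; omega
    · by_cases h4 : (2*(n:ℤ)) ∣ (y - i - 1)
      · have hd : (2*(n:ℤ)) ∣ (y - x - 1) := by
          have h2 := dvd_sub h4 h1
          rwa [show (y-i-1)-(x-i) = y-x-1 from by ring] at h2
        have hle := Int.le_of_dvd (by omega) hd
        rw [if_pos h1, if_neg h3, if_pos h4]; omega
      · rw [if_pos h1, if_neg h3, if_neg h4]; omega
  · by_cases h2 : (2*(n:ℤ)) ∣ (x - i - 1)
    · by_cases h3 : (2*(n:ℤ)) ∣ (y - i)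
      · rw [if_neg h1, if_pos h2, if_pos h3]; omega
      · by_cases h4 : (2*(n:ℤ)) ∣ (y - i - 1)
        · rw [if_neg h1, if_pos h2, if_neg h3, if_pos h4]; omega
        · rw [if_neg h1, if_pos h2, if_neg h3, if_neg h4]; omega
    · by_cases h3 : (2*(n:ℤ)) ∣ (y - i)
      · rw [if_neg h1, if_neg h2, if_pos h3]; omega
      · by_cases h4 : (2*(n:ℤ)) ∣ (y - i - 1)
        · have hy1 : y ≠ x + 1 := by
            intro h
            apply h1
            rw [h] at h4
            rwa [show x + 1 - i - 1 = x - i from by ring] at h4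
          rw [if_neg h1, if_neg h2, if_neg h3, if_pos h4]; omega
        · rw [if_neg h1, if_neg h2, if_neg h3, if_neg h4]; omega

theorem eq_of_dvd_of_range (N a b : ℤ) (h : N ∣ a - b) (ha0 : 0 ≤ a) (ha1 : a < N)
    (hb0 : 0 ≤ b) (hb1 : b < N) : a = b := by
  rcases h with ⟨c, hc⟩
  rcases lt_trichotomy c 0 with h|h|h
  · have hc1 : c ≤ -1 := by omega
    have : a - b ≤ -N := by nlinarith
    omega
  · subst h; omega
  · have hc1 : 1 ≤ c := h
    have : N ≤ a - b := by nlinarith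
    omega

theorem add_mul_emod_key (n : ℕ) (a k : ℤ) :
    (a + 2*(n:ℤ)*k) % (2*(n:ℤ)) = a % (2*(n:ℤ)) :=
  Int.add_mul_emod_self_left a (2*(n:ℤ)) k

theorem stmt_16 (n : ℕ) (hn : 0 < n) (g : Equiv.Perm ℤ) (hg : IsA0 n g)
    (i : ℤ) (hi0 : 0 ≤ i) (hi1 : i ≤ 2*(n:ℤ) - 1) (hlt : g i < g (i + 1)) :
    ((i, i + 1) ∈ Lset n ⇑(g * sPerm n i) ∧ (i, i + 1) ∉ Lset n ⇑g)
    ∧ Set.MapsTo (iotaMap n i) (Lset n ⇑g) (Lset n ⇑(g * sPerm n i))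
    ∧ Set.InjOn (iotaMap n i) (Lset n ⇑g)
    ∧ ∀ j : ℤ, 0 ≤ j → j ≤ 2*(n:ℤ) - 1 → (2*(n:ℤ)) ∣ (j - (-i - 2)) →
        ∀ p ∈ Lset n ⇑g,
          PhiMap n (iotaMap n i p) = iotaMap n j (PhiMap n p) := by
  have hN2 : (0:ℤ) < 2*(n:ℤ) := by omega
  have hsi : sFun n i i = i + 1 := by
    unfold sFun
    rw [if_pos (by simp : (2*(n:ℤ)) ∣ (i - i))]
  have hsi1 : sFun n i (i+1) = i := by
    unfold sFun
    have h1 : ¬ (2*(n:ℤ)) ∣ (i+1-i) := by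
      rw [show i+1-i = 1 from by ring]; exact two_n_not_dvd_one n
    have h2 : (2*(n:ℤ)) ∣ (i+1-i-1) := by
      rw [show i+1-i-1 = 0 from by ring]; exact dvd_zero _
    rw [if_neg h1, if_pos h2]; ring
  -- the key "strict" fact for points of Lset g
  have hkey : ∀ p : ℤ × ℤ, p ∈ Lset n ⇑g → sFun n i p.1 < sFun n i p.2 := by
    intro p hp
    obtain ⟨hx0, hx1, hxy, hgy⟩ := hp
    apply sFun_strict n hn i p.1 p.2 hxy
    rintro ⟨hd, hy⟩
    have hpi : p.1 = i := eq_of_dvd_of_range (2*(n:ℤ)) p.1 i hd hx0 (by omega) hi0 (by omega)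
    rw [hpi] at hy
    rw [hpi, hy] at hgy
    exact absurd hlt (not_lt.mpr hgy.le)
  refine ⟨⟨?_, ?_⟩, ?_, ?_, ?_⟩
  · refine ⟨hi0, by omega, by omega, ?_⟩
    show (g * sPerm n i) (i+1) < (g * sPerm n i) i
    simp only [Equiv.Perm.mul_apply]
    show g (sFun n i (i+1)) < g (sFun n i i)
    rw [hsi, hsi1]; exact hlt
  · intro hmem
    exact absurd hlt (not_lt.mpr hmem.2.2.2.le)
  · -- MapsTo
    intro p hp
    have hsxy := hkey p hp
    obtain ⟨hx0, hx1, hxy, hgy⟩ := hp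
    have hm0 : 0 ≤ sFun n i p.1 % (2*(n:ℤ)) := Int.emod_nonneg _ (by omega)
    have hm1 : sFun n i p.1 % (2*(n:ℤ)) < 2*(n:ℤ) := Int.emod_lt_of_pos _ hN2
    refine ⟨hm0, by
      show sFun n i p.1 % (2*(n:ℤ)) ≤ 2*(n:ℤ) - 1
      omega, by
      show sFun n i p.1 % (2*(n:ℤ)) < sFun n i p.2 + (sFun n i p.1 % (2*(n:ℤ)) - sFun n i p.1)
      omega, ?_⟩
    show (g * sPerm n i) (iotaMap n i p).2 < (g * sPerm n i) (iotaMap n i p).1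
    simp only [Equiv.Perm.mul_apply]
    show g (sFun n i (iotaMap n i p).2) < g (sFun n i (iotaMap n i p).1)
    have hL1 : (iotaMap n i p).1
        = sFun n i p.1 + 2*(n:ℤ)*(-(sFun n i p.1 / (2*(n:ℤ)))) := by
      show sFun n i p.1 % (2*(n:ℤ)) = _
      rw [Int.emod_def]; ring
    have hL2 : (iotaMap n i p).2
        = sFun n i p.2 + 2*(n:ℤ)*(-(sFun n i p.1 / (2*(n:ℤ)))) := by
      show sFun n i p.2 + (sFun n i p.1 % (2*(n:ℤ)) - sFun n i p.1) = _
      rw [Int.emod_def]; ring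
    rw [hL1, hL2, sFun_add, sFun_add, sFun_invol, sFun_invol,
      gadd n g hg.1, gadd n g hg.1]
    omega
  · -- InjOn
    intro p hp q hq heq
    have h1 := congrArg Prod.fst heq
    have h2 := congrArg Prod.snd heq
    simp only [iotaMap] at h1 h2
    have hmod : Int.ModEq (2*(n:ℤ)) (sFun n i p.1) (sFun n i q.1) := h1
    obtain ⟨c, hc⟩ := hmod.dvd
    have he : sFun n i p.1 = sFun n i q.1 + 2*(n:ℤ)*(-c) := by linarith
    have hfst : p.1 = q.1 := by
      have h3 := congrArg (sFun n i) he
      rw [sFun_add, sFun_invol, sFun_invol] at h3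
      have hd : (2*(n:ℤ)) ∣ (p.1 - q.1) := ⟨-c, by linarith⟩
      exact eq_of_dvd_of_range (2*(n:ℤ)) p.1 q.1 hd hp.1 (by have := hp.2.1; omega)
        hq.1 (by have := hq.2.1; omega)
    have hsnd : p.2 = q.2 := by
      rw [hfst] at h2
      have h4 : sFun n i p.2 = sFun n i q.2 := by omega
      have h5 := congrArg (sFun n i) h4
      rwa [sFun_invol, sFun_invol] at h5
    exact Prod.ext hfst hsnd
  · -- Phi commutation
    intro j hj0 hj1 hjdvd p hp
    have hj2 : (2*(n:ℤ)) ∣ (j + i + 2) := by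
      rwa [show j - (-i-2) = j + i + 2 from by ring] at hjdvd
    have hrefl : ∀ z : ℤ, sFun n j (-z - 1) = -(sFun n i z) - 1 :=
      fun z => sFun_reflect n i j z hj2
    set t : ℤ := -(sFun n i p.1 / (2*(n:ℤ))) with ht
    set u : ℤ := -((2*(n:ℤ) - p.2 - 1) / (2*(n:ℤ))) with hu
    have hL1 : (iotaMap n i p).1 = sFun n i p.1 + 2*(n:ℤ)*t := by
      show sFun n i p.1 % (2*(n:ℤ)) = _
      rw [Int.emod_def, ht]; ring
    have hL2 : (iotaMap n i p).2 = sFun n i p.2 + 2*(n:ℤ)*t := by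
      show sFun n i p.2 + (sFun n i p.1 % (2*(n:ℤ)) - sFun n i p.1) = _
      rw [Int.emod_def, ht]; ring
    have hc : (PhiMap n p).1 = (-p.2 - 1) + 2*(n:ℤ)*(u+1) := by
      show (2*(n:ℤ) - p.2 - 1) % (2*(n:ℤ)) = _
      rw [Int.emod_def, hu]; ring
    have hd : (PhiMap n p).2 = (-p.1 - 1) + 2*(n:ℤ)*(u+1) := by
      show 2*(n:ℤ) - p.1 - 1 + ((2*(n:ℤ) - p.2 - 1) % (2*(n:ℤ)) - (2*(n:ℤ) - p.2 - 1)) = _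
      rw [Int.emod_def, hu]; ring
    have hsjc : sFun n j ((PhiMap n p).1) = -(sFun n i p.2) - 1 + 2*(n:ℤ)*(u+1) := by
      rw [hc, sFun_add, hrefl]
    have hsjd : sFun n j ((PhiMap n p).2) = -(sFun n i p.1) - 1 + 2*(n:ℤ)*(u+1) := by
      rw [hd, sFun_add, hrefl]
    have hfst0 : (2*(n:ℤ) - (iotaMap n i p).2 - 1) % (2*(n:ℤ))
        = (-(sFun n i p.2) - 1) % (2*(n:ℤ)) := by
      rw [hL2, show 2*(n:ℤ) - (sFun n i p.2 + 2*(n:ℤ)*t) - 1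
        = (-(sFun n i p.2) - 1) + 2*(n:ℤ)*(1-t) from by ring, add_mul_emod_key]
    have hfst : (PhiMap n (iotaMap n i p)).1 = (-(sFun n i p.2) - 1) % (2*(n:ℤ)) := hfst0
    have hfst' : (iotaMap n j (PhiMap n p)).1 = (-(sFun n i p.2) - 1) % (2*(n:ℤ)) := by
      show sFun n j ((PhiMap n p).1) % (2*(n:ℤ)) = _
      rw [hsjc, add_mul_emod_key]
    have hsnd : (PhiMap n (iotaMap n i p)).2
        = (-(sFun n i p.2) - 1) % (2*(n:ℤ)) + sFun n i p.2 - sFun n i p.1 := by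
      show 2*(n:ℤ) - (iotaMap n i p).1 - 1
        + ((2*(n:ℤ) - (iotaMap n i p).2 - 1) % (2*(n:ℤ)) - (2*(n:ℤ) - (iotaMap n i p).2 - 1)) = _
      rw [hfst0, hL1, hL2]; ring
    have hsnd' : (iotaMap n j (PhiMap n p)).2
        = (-(sFun n i p.2) - 1) % (2*(n:ℤ)) + sFun n i p.2 - sFun n i p.1 := by
      show sFun n j ((PhiMap n p).2)
        + (sFun n j ((PhiMap n p).1) % (2*(n:ℤ)) - sFun n j ((PhiMap n p).1)) = _
      rw [hsjd, hsjc, add_mul_emod_key]; ring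
    exact Prod.ext (hfst.trans hfst'.symm) (hsnd.trans hsnd'.symm)
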